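/- Fix integers k > l + 1 ≥ 1 and let A = (∑_{α} (2ℕ)^{(l−k)α})^{1/2} (finite). Let h = (h_α)_{α∈ℓ} and f = (f_α)_{α∈ℓ} be complex-valued families with ‖h‖_l² = ∑_α |h_α|² (2ℕ)^{−lα} < ∞ and ‖f‖_k² = ∑_α |f_α|² (2ℕ)^{−kα} < ∞. Define the Wick/Cauchy product (h∘f)_γ = ∑_{α+β=γ} h_α f_β. Then ‖h∘f‖_k ≤ A · ‖h‖_l · ‖f‖_k. -/

import Mathlib

/-- The weight `(2ℕ)^{-kα} = ∏_j (2j)^{-k α_j}` (index `j : ℕ` stands for `j + 1 ≥ 1`). -/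
noncomputable def wt (k : ℤ) (α : ℕ →₀ ℕ) : ℝ :=
  ∏ j ∈ α.support, (2 * ((j : ℝ) + 1)) ^ (-k * (α j : ℤ))

/-- The Wick (Cauchy) product of coefficient families indexed by multi-indices. -/
noncomputable def wick (h f : (ℕ →₀ ℕ) → ℂ) (γ : ℕ →₀ ℕ) : ℂ :=
  ∑ p ∈ Finset.HasAntidiagonal.antidiagonal γ, h p.1 * f p.2

open Finset

lemma wt_pos (k : ℤ) (α : ℕ →₀ ℕ) : 0 < wt k α := by
  apply Finset.prod_pos
  intro j _
  apply zpow_pos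
  positivity

lemma wt_nonneg (k : ℤ) (α : ℕ →₀ ℕ) : 0 ≤ wt k α := (wt_pos k α).le

lemma wt_mul_wt (a b : ℤ) (α : ℕ →₀ ℕ) : wt a α * wt b α = wt (a + b) α := by
  unfold wt
  rw [← Finset.prod_mul_distrib]
  refine Finset.prod_congr rfl fun j _ => ?_
  have hb : (2 * ((j : ℝ) + 1)) ≠ 0 := by positivity
  rw [← zpow_add₀ hb]
  congr 1
  ring

lemma wt_add (k : ℤ) (α β : ℕ →₀ ℕ) : wt k (α + β) = wt k α * wt k β := by
  show Finsupp.prod (α + β) (fun j n => (2 * ((j : ℝ) + 1)) ^ (-k * (n : ℤ)))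
      = Finsupp.prod α (fun j n => (2 * ((j : ℝ) + 1)) ^ (-k * (n : ℤ)))
      * Finsupp.prod β (fun j n => (2 * ((j : ℝ) + 1)) ^ (-k * (n : ℤ)))
  refine Finsupp.prod_add_index' (fun a => by simp) (fun a b c => ?_)
  have hb : (2 * ((a : ℝ) + 1)) ≠ 0 := by positivity
  rw [← zpow_add₀ hb]
  congr 1
  push_cast
  ring

/-- Each geometric partial sum with ratio `x ≤ 1/2` is at most `exp (2x)`. -/
lemma geom_sum_le_exp {x : ℝ} (h0 : 0 ≤ x) (h2 : x ≤ 1/2) (m : ℕ) :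
    ∑ n ∈ range m, x ^ n ≤ Real.exp (2 * x) := by
  have hx1 : x < 1 := lt_of_le_of_lt h2 (by norm_num)
  have h1 : ∑ n ∈ range m, x ^ n ≤ (1 - x)⁻¹ :=
    (Summable.sum_le_tsum (range m) (fun n _ => pow_nonneg h0 n)
      (summable_geometric_of_lt_one h0 hx1)).trans_eq (tsum_geometric_of_lt_one h0 hx1)
  have hpos : 0 < 1 - x := by linarith
  have h2' : (1 - x)⁻¹ ≤ 1 + 2 * x := by
    rw [inv_le_iff_one_le_mul₀ hpos]
    nlinarith
  have h3 : 1 + 2 * x ≤ Real.exp (2 * x) := by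
    have := Real.add_one_le_exp (2 * x)
    linarith

  linarith

set_option maxHeartbeats 1000000 in
/-- Summability of the weights `wt r` for `r ≥ 2`. -/
lemma summable_wt {r : ℤ} (hr : 2 ≤ r) : Summable (wt r) := by
  classical
  -- the comparison sequence
  have hBsum : Summable (fun i : ℕ => 1 / ((i : ℝ) + 1) ^ 2) := by
    have h := Real.summable_one_div_nat_pow.mpr (by norm_num : 1 < 2)
    have := (summable_nat_add_iff 1).mpr h
    refine this.congr fun n => ?_
    push_cast
    ring_nf
  set B : ℝ := ∑' i : ℕ, 1 / ((i : ℝ) + 1) ^ 2 with hB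
  have hBnn : 0 ≤ B := tsum_nonneg fun i => by positivity
  set x : ℕ → ℝ := fun i => (2 * ((i : ℝ) + 1)) ^ (-r) with hxdef
  have hbase : ∀ i : ℕ, (1 : ℝ) ≤ 2 * ((i : ℝ) + 1) := by
    intro i
    have : (0 : ℝ) ≤ (i : ℝ) := Nat.cast_nonneg i
    nlinarith
  have hx0 : ∀ i, 0 ≤ x i := fun i => zpow_nonneg (by positivity) _
  have hxle : ∀ i : ℕ, x i ≤ ((2 * ((i : ℝ) + 1)) ^ (2 : ℕ))⁻¹ := by
    intro i
    have h1 : x i ≤ (2 * ((i : ℝ) + 1)) ^ (-2 : ℤ) :=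
      zpow_le_zpow_right₀ (hbase i) (by omega : -r ≤ -2)
    rwa [show (-2 : ℤ) = -((2:ℕ) : ℤ) by norm_num, zpow_neg, zpow_natCast] at h1
  have hx2 : ∀ i : ℕ, x i ≤ 1 / ((i : ℝ) + 1) ^ 2 := by
    intro i
    refine (hxle i).trans ?_
    rw [one_div]
    apply inv_anti₀ (by positivity)
    have : (0 : ℝ) ≤ (i : ℝ) + 1 := by positivity
    nlinarith
  have hxhalf : ∀ i : ℕ, x i ≤ 1 / 2 := by
    intro i
    refine (hxle i).trans ?_
    have h4 : (4 : ℝ) ≤ (2 * ((i : ℝ) + 1)) ^ (2 : ℕ) := by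
      have : (0 : ℝ) ≤ (i : ℝ) := Nat.cast_nonneg i
      nlinarith
    have := inv_anti₀ (by norm_num : (0:ℝ) < 4) h4
    rw [show ((4:ℝ))⁻¹ = 1/4 by norm_num] at this
    linarith
  refine summable_of_sum_le (c := Real.exp (2 * B)) (fun α => wt_nonneg r α) fun s => ?_
  -- choose bounds on supports and values
  set N : ℕ := 1 + s.sup (fun α => α.support.sup id) with hN
  set M : ℕ := s.sup (fun α => α.support.sup α) with hM
  have hsupp : ∀ α ∈ s, ∀ j ∈ α.support, j < N := by
    intro α hα j hj
    have h1 : j ≤ α.support.sup id := Finset.le_sup (f := id) hj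
    have h2 : α.support.sup id ≤ s.sup (fun α => α.support.sup id) :=
      Finset.le_sup (f := fun α => α.support.sup id) hα
    omega
  have hval : ∀ α ∈ s, ∀ j, α j ≤ M := by
    intro α hα j
    by_cases hj : j ∈ α.support
    · exact le_trans (Finset.le_sup (f := α) hj) (Finset.le_sup (f := fun α => α.support.sup α) hα)
    · simp [Finsupp.notMem_support_iff.mp hj]
  have hwt : ∀ α ∈ s, wt r α = ∏ i ∈ range N, x i ^ (α i) := by
    intro α hα
    unfold wt
    rw [Finset.prod_subset (fun j hj => Finset.mem_range.mpr (hsupp α hα j hj))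
      (fun j _ hj => by simp [Finsupp.notMem_support_iff.mp hj])]
    refine Finset.prod_congr rfl fun j _ => ?_
    rw [hxdef]
    rw [show -r * ((α j : ℕ) : ℤ) = (-r) * ((α j : ℕ) : ℤ) by ring, zpow_mul, zpow_natCast]
  -- pack into functions on `Fin N`
  set e : (ℕ →₀ ℕ) → (Fin N → ℕ) := fun α i => α i with he
  have hinj : ∀ p ∈ s, ∀ q ∈ s, e p = e q → p = q := by
    intro p hp q hq hpq
    ext j
    by_cases hj : j < N
    · exact congrFun hpq ⟨j, hj⟩
    · have h1 : j ∉ p.support := fun hc => hj (hsupp p hp j hc)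
      have h2 : j ∉ q.support := fun hc => hj (hsupp q hq j hc)
      rw [Finsupp.notMem_support_iff.mp h1, Finsupp.notMem_support_iff.mp h2]
  calc ∑ α ∈ s, wt r α
      = ∑ α ∈ s, ∏ i : Fin N, x i ^ (e α i) := by
        refine Finset.sum_congr rfl fun α hα => ?_
        rw [hwt α hα, ← Fin.prod_univ_eq_prod_range (fun i => x i ^ (α i)) N]
    _ = ∑ φ ∈ s.image e, ∏ i : Fin N, x i ^ (φ i) :=
        (Finset.sum_image (f := fun φ : Fin N → ℕ => ∏ i : Fin N, x i ^ (φ i)) hinj).symm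
    _ ≤ ∑ φ ∈ Fintype.piFinset (fun _ : Fin N => range (M + 1)), ∏ i : Fin N, x i ^ (φ i) := by
        refine Finset.sum_le_sum_of_subset_of_nonneg ?_ fun φ _ _ =>
          Finset.prod_nonneg fun i _ => pow_nonneg (hx0 i) _
        intro φ hφ
        rcases Finset.mem_image.mp hφ with ⟨α, hα, rfl⟩
        rw [Fintype.mem_piFinset]
        intro i
        exact Finset.mem_range.mpr (Nat.lt_succ_of_le (hval α hα i))
    _ = ∏ i : Fin N, ∑ n ∈ range (M + 1), x i ^ n := (Finset.prod_univ_sum _ _).symm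
    _ ≤ ∏ i : Fin N, Real.exp (2 * x i) := by
        refine Finset.prod_le_prod (fun i _ => Finset.sum_nonneg fun n _ => pow_nonneg (hx0 i) n)
          fun i _ => geom_sum_le_exp (hx0 i) (hxhalf i) (M + 1)
    _ = Real.exp (∑ i : Fin N, 2 * x i) := (Real.exp_sum _ _).symm
    _ ≤ Real.exp (2 * B) := by
        apply Real.exp_le_exp.mpr
        rw [← Finset.mul_sum]
        have hsx : ∑ i : Fin N, x i ≤ B := by
          calc ∑ i : Fin N, x i = ∑ i ∈ range N, x i := Fin.sum_univ_eq_sum_range x N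
            _ ≤ ∑ i ∈ range N, 1 / ((i : ℝ) + 1) ^ 2 :=
                Finset.sum_le_sum fun i _ => hx2 i
            _ ≤ B := Summable.sum_le_tsum _ (fun i _ => by positivity) hBsum
        linarith

/-- The key pointwise bound coming from Cauchy–Schwarz on the antidiagonal. -/
lemma key_bound (k l : ℤ) (h f : (ℕ →₀ ℕ) → ℂ) (hS : Summable (wt (k - l))) (γ : ℕ →₀ ℕ) :
    ‖wick h f γ‖ ^ 2 * wt k γ ≤ (∑' α, wt (k - l) α) *
      ∑ p ∈ Finset.HasAntidiagonal.antidiagonal γ, (‖h p.1‖ ^ 2 * wt l p.1) * (‖f p.2‖ ^ 2 * wt k p.2) := by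
  classical
  set S := Finset.HasAntidiagonal.antidiagonal γ with hSdef
  have h1 : ‖wick h f γ‖ ≤ ∑ p ∈ S, ‖h p.1‖ * ‖f p.2‖ :=
    (norm_sum_le _ _).trans (le_of_eq (Finset.sum_congr rfl fun p _ => norm_mul _ _))
  have h2 : ‖wick h f γ‖ ^ 2 * wt k γ ≤ (∑ p ∈ S, ‖h p.1‖ * ‖f p.2‖) ^ 2 * wt k γ :=
    mul_le_mul_of_nonneg_right (pow_le_pow_left₀ (norm_nonneg _) h1 2) (wt_nonneg _ _)
  have h3 : (∑ p ∈ S, ‖h p.1‖ * ‖f p.2‖) ^ 2 * wt k γ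
      = (∑ p ∈ S, Real.sqrt (wt (k - l) p.1) *
          (‖h p.1‖ * Real.sqrt (wt l p.1) * (‖f p.2‖ * Real.sqrt (wt k p.2)))) ^ 2 := by
    have hterm : ∀ p ∈ S, Real.sqrt (wt (k - l) p.1) *
        (‖h p.1‖ * Real.sqrt (wt l p.1) * (‖f p.2‖ * Real.sqrt (wt k p.2)))
        = (‖h p.1‖ * ‖f p.2‖) * Real.sqrt (wt k γ) := by
      intro p hp
      have hγ : p.1 + p.2 = γ := Finset.HasAntidiagonal.mem_antidiagonal.mp hp
      have e1 : Real.sqrt (wt (k - l) p.1) * Real.sqrt (wt l p.1) = Real.sqrt (wt k p.1) := by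
        rw [← Real.sqrt_mul (wt_nonneg _ _), wt_mul_wt, sub_add_cancel]
      have e2 : Real.sqrt (wt k p.1) * Real.sqrt (wt k p.2) = Real.sqrt (wt k γ) := by
        rw [← Real.sqrt_mul (wt_nonneg _ _), ← wt_add, hγ]
      calc Real.sqrt (wt (k - l) p.1) *
            (‖h p.1‖ * Real.sqrt (wt l p.1) * (‖f p.2‖ * Real.sqrt (wt k p.2)))
          = (‖h p.1‖ * ‖f p.2‖) *
            (Real.sqrt (wt (k - l) p.1) * Real.sqrt (wt l p.1) * Real.sqrt (wt k p.2)) := by ring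
        _ = (‖h p.1‖ * ‖f p.2‖) * Real.sqrt (wt k γ) := by rw [e1, e2]
    rw [Finset.sum_congr rfl hterm, ← Finset.sum_mul, mul_pow,
      Real.sq_sqrt (wt_nonneg _ _)]
  have h4 := Finset.sum_mul_sq_le_sq_mul_sq S
    (fun p => Real.sqrt (wt (k - l) p.1))
    (fun p => ‖h p.1‖ * Real.sqrt (wt l p.1) * (‖f p.2‖ * Real.sqrt (wt k p.2)))
  have h5 : ∑ p ∈ S, Real.sqrt (wt (k - l) p.1) ^ 2 = ∑ p ∈ S, wt (k - l) p.1 :=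
    Finset.sum_congr rfl fun p _ => Real.sq_sqrt (wt_nonneg _ _)
  have h6 : ∑ p ∈ S, (‖h p.1‖ * Real.sqrt (wt l p.1) * (‖f p.2‖ * Real.sqrt (wt k p.2))) ^ 2
      = ∑ p ∈ S, (‖h p.1‖ ^ 2 * wt l p.1) * (‖f p.2‖ ^ 2 * wt k p.2) := by
    refine Finset.sum_congr rfl fun p _ => ?_
    rw [mul_pow, mul_pow, mul_pow, Real.sq_sqrt (wt_nonneg _ _), Real.sq_sqrt (wt_nonneg _ _)]
  have h7 : ∑ p ∈ S, wt (k - l) p.1 ≤ ∑' α, wt (k - l) α := by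
    have hinj : ∀ p ∈ S, ∀ q ∈ S, p.1 = q.1 → p = q := by
      intro p hp q hq hpq
      rw [hSdef, Finset.HasAntidiagonal.mem_antidiagonal] at hp hq
      refine Prod.ext hpq (add_left_cancel (a := p.1) ?_)
      rw [hp, hpq, hq]
    calc ∑ p ∈ S, wt (k - l) p.1 = ∑ a ∈ S.image Prod.fst, wt (k - l) a :=
          (Finset.sum_image hinj).symm
      _ ≤ ∑' α, wt (k - l) α := Summable.sum_le_tsum _ (fun a _ => wt_nonneg _ _) hS
  calc ‖wick h f γ‖ ^ 2 * wt k γ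
      ≤ (∑ p ∈ S, Real.sqrt (wt (k - l) p.1) *
          (‖h p.1‖ * Real.sqrt (wt l p.1) * (‖f p.2‖ * Real.sqrt (wt k p.2)))) ^ 2 :=
        h2.trans_eq h3
    _ ≤ (∑ p ∈ S, wt (k - l) p.1) *
          ∑ p ∈ S, (‖h p.1‖ ^ 2 * wt l p.1) * (‖f p.2‖ ^ 2 * wt k p.2) := by
        rw [← h5, ← h6]; exact h4
    _ ≤ (∑' α, wt (k - l) α) *
          ∑ p ∈ S, (‖h p.1‖ ^ 2 * wt l p.1) * (‖f p.2‖ ^ 2 * wt k p.2) := by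
        refine mul_le_mul_of_nonneg_right h7 ?_
        exact Finset.sum_nonneg fun p _ => mul_nonneg
          (mul_nonneg (sq_nonneg _) (wt_nonneg _ _)) (mul_nonneg (sq_nonneg _) (wt_nonneg _ _))

/-- Våge's inequality: `‖h ∘ f‖_k ≤ A(k-l) ‖h‖_l ‖f‖_k` for `k > l + 1`. -/
theorem vage_inequality (k l : ℤ) (hkl : l + 1 < k)
    (h f : (ℕ →₀ ℕ) → ℂ)
    (hh : Summable fun α => ‖h α‖ ^ 2 * wt l α)
    (hf : Summable fun α => ‖f α‖ ^ 2 * wt k α) :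
    Real.sqrt (∑' γ : ℕ →₀ ℕ, ‖wick h f γ‖ ^ 2 * wt k γ) ≤
      Real.sqrt (∑' α : ℕ →₀ ℕ,
          ∏ j ∈ α.support, (2 * ((j : ℝ) + 1)) ^ ((l - k) * (α j : ℤ))) *
        Real.sqrt (∑' α : ℕ →₀ ℕ, ‖h α‖ ^ 2 * wt l α) *
        Real.sqrt (∑' α : ℕ →₀ ℕ, ‖f α‖ ^ 2 * wt k α) := by
  classical
  have hr : (2 : ℤ) ≤ k - l := by omega
  have hS : Summable (wt (k - l)) := summable_wt hr
  set u : (ℕ →₀ ℕ) → ℝ := fun α => ‖h α‖ ^ 2 * wt l α with hu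
  set v : (ℕ →₀ ℕ) → ℝ := fun α => ‖f α‖ ^ 2 * wt k α with hv
  have hu0 : ∀ α, 0 ≤ u α := fun α => mul_nonneg (sq_nonneg _) (wt_nonneg _ _)
  have hv0 : ∀ α, 0 ≤ v α := fun α => mul_nonneg (sq_nonneg _) (wt_nonneg _ _)
  have hw : Summable fun p : (ℕ →₀ ℕ) × (ℕ →₀ ℕ) => u p.1 * v p.2 :=
    hh.mul_of_nonneg hf (fun α => hu0 α) (fun α => hv0 α)
  have hsum : Summable fun γ => ∑ p ∈ Finset.HasAntidiagonal.antidiagonal γ, u p.1 * v p.2 :=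
    summable_sum_mul_antidiagonal_of_summable_mul hw
  have hA2eq : (∑' α : ℕ →₀ ℕ,
      ∏ j ∈ α.support, (2 * ((j : ℝ) + 1)) ^ ((l - k) * (α j : ℤ))) = ∑' α, wt (k - l) α := by
    refine tsum_congr fun α => ?_
    unfold wt
    refine Finset.prod_congr rfl fun j _ => ?_
    congr 1
    ring
  set A2 : ℝ := ∑' α, wt (k - l) α with hA2
  have hA2nn : 0 ≤ A2 := tsum_nonneg fun α => wt_nonneg _ _
  have key : ∀ γ, ‖wick h f γ‖ ^ 2 * wt k γ ≤
      A2 * ∑ p ∈ Finset.HasAntidiagonal.antidiagonal γ, u p.1 * v p.2 := fun γ => key_bound k l h f hS γ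
  have hLsum : Summable fun γ => ‖wick h f γ‖ ^ 2 * wt k γ :=
    Summable.of_nonneg_of_le (fun γ => mul_nonneg (sq_nonneg _) (wt_nonneg _ _)) key
      (hsum.mul_left A2)
  have hUnn : 0 ≤ ∑' α, u α := tsum_nonneg hu0
  have hle : (∑' γ, ‖wick h f γ‖ ^ 2 * wt k γ) ≤ A2 * ((∑' α, u α) * ∑' α, v α) := by
    calc (∑' γ, ‖wick h f γ‖ ^ 2 * wt k γ)
        ≤ ∑' γ, A2 * ∑ p ∈ Finset.HasAntidiagonal.antidiagonal γ, u p.1 * v p.2 :=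
          Summable.tsum_le_tsum key hLsum (hsum.mul_left A2)
      _ = A2 * ∑' γ, ∑ p ∈ Finset.HasAntidiagonal.antidiagonal γ, u p.1 * v p.2 := tsum_mul_left
      _ = A2 * ((∑' α, u α) * ∑' α, v α) := by
          rw [Summable.tsum_mul_tsum_eq_tsum_sum_antidiagonal hh hf hw]
  rw [hA2eq, ← Real.sqrt_mul hA2nn, ← Real.sqrt_mul (mul_nonneg hA2nn hUnn)]
  apply Real.sqrt_le_sqrt
  calc (∑' γ, ‖wick h f γ‖ ^ 2 * wt k γ) ≤ A2 * ((∑' α, u α) * ∑' α, v α) := hle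
    _ = A2 * (∑' α, u α) * ∑' α, v α := by ring
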